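/- Let u, v ∈ ℝ³ be linearly independent with |u|² + |v|² = 1, w = u × v, γ > 0. Then any solution r(t) of dr/dt = 4γ[ u(u·r) + v(v·r) + 2w − r ] converges to 2w as t → ∞, independently of the initial condition r(0). -/

import Mathlib

noncomputable section

/-- Euclidean inner product on ℝ³. -/
def dot3 (a b : Fin 3 → ℝ) : ℝ := a 0 * b 0 + a 1 * b 1 + a 2 * b 2

/-- Cross product on ℝ³. -/
def cross3 (a b : Fin 3 → ℝ) : Fin 3 → ℝ :=
  ![a 1 * b 2 - a 2 * b 1, a 2 * b 0 - a 0 * b 2, a 0 * b 1 - a 1 * b 0]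

private lemma dot3_comm (a b : Fin 3 → ℝ) : dot3 a b = dot3 b a := by
  simp [dot3]; ring

private lemma dot3_self_eq_zero {a : Fin 3 → ℝ} (h : dot3 a a = 0) : a = 0 := by
  funext i
  simp [dot3] at h
  fin_cases i <;> simp <;> nlinarith [sq_nonneg (a 0), sq_nonneg (a 1), sq_nonneg (a 2)]

private lemma dot3_hasDerivAt (x : Fin 3 → ℝ) {r : ℝ → Fin 3 → ℝ} {d : Fin 3 → ℝ} {t : ℝ}
    (h : HasDerivAt r d t) : HasDerivAt (fun τ => dot3 x (r τ)) (dot3 x d) t := by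
  have hi := hasDerivAt_pi.1 h
  have := (((hi 0).const_mul (x 0)).add ((hi 1).const_mul (x 1))).add ((hi 2).const_mul (x 2))
  simp only [dot3]; exact this

private lemma dot3_smul_combo (x u v w z : Fin 3 → ℝ) (γ p q : ℝ) :
    dot3 x ((4*γ) • (p • u + q • v + (2:ℝ) • w - z)) =
      4*γ*(p * dot3 x u + q * dot3 x v + 2 * dot3 x w - dot3 x z) := by
  simp [dot3]; ring

private lemma quad_ineq (γ A B C k a b : ℝ) (hγ : 0 < γ) (hnorm : A + B = 1)
    (hk : k = A*B - C^2) :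
    2*a*(4*γ*(a*A + b*C + 2*0 - a)) + 2*b*(4*γ*(a*C + b*B + 2*0 - b))
      + 8*γ*k*(a^2+b^2) ≤ 0 := by
  have hB : B = 1 - A := by linarith
  subst hB hk
  nlinarith [mul_nonneg hγ.le (sq_nonneg ((1-A)*a - C*b)),
    mul_nonneg hγ.le (sq_nonneg (C*a - A*b))]

theorem stmt6 (γ : ℝ) (hγ : 0 < γ) (u v : Fin 3 → ℝ)
    (hindep : LinearIndependent ℝ ![u, v]) (hnorm : dot3 u u + dot3 v v = 1)
    (w : Fin 3 → ℝ) (hw : w = cross3 u v)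
    (r : ℝ → Fin 3 → ℝ)
    (hr : ∀ t : ℝ, HasDerivAt r
      ((4 * γ) • (dot3 u (r t) • u + dot3 v (r t) • v + (2 : ℝ) • w - r t)) t) :
    Filter.Tendsto r Filter.atTop (nhds ((2 : ℝ) • w)) := by
  classical
  open Filter Real in
  -- basic dot-product facts
  have huw : dot3 u w = 0 := by subst hw; simp [dot3, cross3]; ring
  have hvw : dot3 v w = 0 := by subst hw; simp [dot3, cross3]; ring
  set A : ℝ := dot3 u u with hA
  set B : ℝ := dot3 v v with hB
  set C : ℝ := dot3 u v with hC
  set k : ℝ := dot3 w w with hk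
  have hlag : k = A * B - C ^ 2 := by
    rw [hk, hA, hB, hC, hw]; simp [dot3, cross3]; ring
  -- k > 0
  have hknn : (0:ℝ) ≤ k := by
    rw [hk]; simp only [dot3]
    nlinarith [mul_self_nonneg (w 0), mul_self_nonneg (w 1), mul_self_nonneg (w 2)]
  have hk0 : 0 < k := by
    rcases hknn.lt_or_eq with h | h
    · exact h
    · exfalso
      have hx : dot3 (A • v + (-C) • u) (A • v + (-C) • u) = A * k := by
        rw [hlag, hA, hB, hC]; simp [dot3]; ring
      rw [← h, mul_zero] at hx
      have hx0 : (-C) • u + A • v = 0 := by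
        have := dot3_self_eq_zero hx; linear_combination (norm := abel) this
      obtain ⟨-, hA0⟩ := LinearIndependent.pair_iff.1 hindep (-C) A hx0
      have hu0 : u = 0 := dot3_self_eq_zero (by rw [← hA, hA0])
      obtain ⟨h10, -⟩ := LinearIndependent.pair_iff.1 hindep 1 0
        (by simp [hu0])
      exact one_ne_zero h10
  -- the scalar observables
  set a : ℝ → ℝ := fun t => dot3 u (r t) with ha_def
  set b : ℝ → ℝ := fun t => dot3 v (r t) with hb_def
  set c : ℝ → ℝ := fun t => dot3 w (r t) with hc_def
  have ha : ∀ t, HasDerivAt a (4*γ*(a t * A + b t * C + 2*0 - a t)) t := by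
    intro t
    have h := dot3_hasDerivAt u (hr t)
    rw [dot3_smul_combo] at h
    simpa only [← hA, ← hC, huw, ← ha_def, ← hb_def] using h
  have hb : ∀ t, HasDerivAt b (4*γ*(a t * C + b t * B + 2*0 - b t)) t := by
    intro t
    have h := dot3_hasDerivAt v (hr t)
    rw [dot3_smul_combo] at h
    simpa only [dot3_comm v u, ← hB, ← hC, hvw, ← ha_def, ← hb_def] using h
  have hc : ∀ t, HasDerivAt c (4*γ*(2*k - c t)) t := by
    intro t
    have h := dot3_hasDerivAt w (hr t)
    rw [dot3_smul_combo] at h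
    simpa only [dot3_comm w u, dot3_comm w v, huw, hvw, ← hk, ← hc_def,
      mul_zero, zero_add, add_zero, zero_mul] using h
  -- c tends to 2k via explicit solution
  have hexp : ∀ (μ t : ℝ), HasDerivAt (fun τ => Real.exp (μ*τ)) (Real.exp (μ*t) * μ) t := by
    intro μ t
    simpa using ((hasDerivAt_id t).const_mul μ).exp
  have hγ4 : (0:ℝ) < 4*γ := by linarith
  set ct : ℝ → ℝ := fun t => c t - 2*k with hct_def
  have hg0 : ∀ t, HasDerivAt (fun τ => ct τ * Real.exp (4*γ*τ)) 0 t := by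
    intro t
    have h := (((hc t).sub_const (2*k)).mul (hexp (4*γ) t))
    exact h.congr_deriv (by ring)
  have hgc : ∀ t, ct t * Real.exp (4*γ*t) = ct 0 := by
    intro t
    have := is_const_of_deriv_eq_zero (fun x => (hg0 x).differentiableAt)
      (fun x => (hg0 x).deriv) t 0
    simpa using this
  have hct : ∀ t, ct t = ct 0 * Real.exp (-(4*γ*t)) := by
    intro t
    have h := hgc t
    rw [Real.exp_neg]
    field_simp at h ⊢
    linarith [h]
  have htop : Filter.Tendsto (fun t : ℝ => 4*γ*t) Filter.atTop Filter.atTop :=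
    Filter.Tendsto.const_mul_atTop hγ4 Filter.tendsto_id
  have hct0 : Filter.Tendsto ct Filter.atTop (nhds 0) := by
    have h1 : Filter.Tendsto (fun t : ℝ => Real.exp (-(4*γ*t))) Filter.atTop (nhds 0) :=
      Real.tendsto_exp_neg_atTop_nhds_zero.comp htop
    have h2 := h1.const_mul (ct 0)
    rw [mul_zero] at h2
    exact Filter.Tendsto.congr (fun t => (hct t).symm) h2
  have hc2k : Filter.Tendsto c Filter.atTop (nhds (2*k)) := by
    have := hct0.add_const (2*k)
    rw [zero_add] at this
    refine this.congr fun t => ?_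
    simp [hct_def]
  -- E = a² + b² tends to 0
  set E : ℝ → ℝ := fun t => a t ^ 2 + b t ^ 2 with hE_def
  set κ : ℝ := 8*γ*k with hκ_def
  have hκ0 : 0 < κ := by rw [hκ_def]; positivity
  set F : ℝ → ℝ := fun t => E t * Real.exp (κ*t) with hF_def
  have hFd : ∀ t, HasDerivAt F
      ((2*a t*(4*γ*(a t * A + b t * C + 2*0 - a t))
        + 2*b t*(4*γ*(a t * C + b t * B + 2*0 - b t))) * Real.exp (κ*t)
        + E t * (Real.exp (κ*t) * κ)) t := by
    intro t
    have hEt : HasDerivAt E (2*a t*(4*γ*(a t * A + b t * C + 2*0 - a t))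
        + 2*b t*(4*γ*(a t * C + b t * B + 2*0 - b t))) t := by
      have h := ((ha t).pow 2).add ((hb t).pow 2)
      exact h.congr_deriv (by ring)
    exact hEt.mul (hexp κ t)
  have hFanti : Antitone F := by
    refine antitone_of_deriv_nonpos (fun t => (hFd t).differentiableAt) fun t => ?_
    rw [(hFd t).deriv]
    have hq := quad_ineq γ A B C k (a t) (b t) hγ hnorm hlag
    have : (2*a t*(4*γ*(a t * A + b t * C + 2*0 - a t))
        + 2*b t*(4*γ*(a t * C + b t * B + 2*0 - b t))) * Real.exp (κ*t)
        + E t * (Real.exp (κ*t) * κ)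
        = (2*a t*(4*γ*(a t * A + b t * C + 2*0 - a t))
        + 2*b t*(4*γ*(a t * C + b t * B + 2*0 - b t))
        + κ * E t) * Real.exp (κ*t) := by ring
    rw [this]
    refine mul_nonpos_of_nonpos_of_nonneg ?_ (Real.exp_nonneg _)
    have : κ * E t = 8*γ*k*(a t^2 + b t^2) := by rw [hκ_def, hE_def]
    rw [this]
    linarith [hq]
  have hEnn : ∀ t, 0 ≤ E t := fun t => by rw [hE_def]; positivity
  have hub : ∀ᶠ t in Filter.atTop, E t ≤ F 0 * Real.exp (-(κ*t)) := by
    filter_upwards [Filter.eventually_ge_atTop (0:ℝ)] with t ht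
    have hE_eq : E t = F t * Real.exp (-(κ*t)) := by
      rw [hF_def]; simp only [mul_assoc, ← Real.exp_add]; simp
    rw [hE_eq]
    exact mul_le_mul_of_nonneg_right (hFanti ht) (Real.exp_nonneg _)
  have hrhs : Filter.Tendsto (fun t => F 0 * Real.exp (-(κ*t))) Filter.atTop (nhds 0) := by
    have h1 : Filter.Tendsto (fun t : ℝ => Real.exp (-(κ*t))) Filter.atTop (nhds 0) :=
      Real.tendsto_exp_neg_atTop_nhds_zero.comp
        (Filter.Tendsto.const_mul_atTop hκ0 Filter.tendsto_id)
    have h2 := h1.const_mul (F 0)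
    rwa [mul_zero] at h2
  have hE0 : Filter.Tendsto E Filter.atTop (nhds 0) :=
    tendsto_of_tendsto_of_tendsto_of_le_of_le' tendsto_const_nhds hrhs
      (Filter.Eventually.of_forall hEnn) hub
  -- a, b tend to 0
  have habs : ∀ (f : ℝ → ℝ), (∀ t, f t ^ 2 ≤ E t) → Filter.Tendsto f Filter.atTop (nhds 0) := by
    intro f hf
    have hsq : Filter.Tendsto (fun t => f t ^ 2) Filter.atTop (nhds 0) :=
      tendsto_of_tendsto_of_tendsto_of_le_of_le tendsto_const_nhds hE0
        (fun t => sq_nonneg _) hf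
    have h1 := (Real.continuous_sqrt.tendsto 0).comp hsq
    rw [Real.sqrt_zero] at h1
    rw [tendsto_zero_iff_abs_tendsto_zero]
    refine h1.congr fun t => ?_
    simp [Real.sqrt_sq_eq_abs]
  have ha0 : Filter.Tendsto a Filter.atTop (nhds 0) :=
    habs a fun t => by show a t ^ 2 ≤ a t ^ 2 + b t ^ 2; nlinarith [sq_nonneg (b t)]
  have hb0 : Filter.Tendsto b Filter.atTop (nhds 0) :=
    habs b fun t => by show b t ^ 2 ≤ a t ^ 2 + b t ^ 2; nlinarith [sq_nonneg (a t)]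
  -- recover r via the invertible matrix with rows u, v, w
  set M : Matrix (Fin 3) (Fin 3) ℝ := Matrix.of ![u, v, w] with hM_def
  have key : ∀ z, M.mulVec z = ![dot3 u z, dot3 v z, dot3 w z] := by
    intro z
    funext i
    fin_cases i <;> simp [hM_def, Matrix.mulVec, dotProduct, Fin.sum_univ_three, dot3]
  have hdet : M.det = k := by
    rw [hM_def, hk, hw]; simp [Matrix.det_fin_three, dot3, cross3]; ring
  have hMunit : IsUnit M.det := by
    rw [hdet]; exact (isUnit_iff_ne_zero).2 hk0.ne'
  have hinv : ∀ z, M⁻¹.mulVec (M.mulVec z) = z := by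
    intro z
    rw [Matrix.mulVec_mulVec, Matrix.nonsing_inv_mul M hMunit, Matrix.one_mulVec]
  have hrt : ∀ t, r t = M⁻¹.mulVec ![a t, b t, c t] := by
    intro t
    rw [show ![a t, b t, c t] = M.mulVec (r t) from (key (r t)).symm, hinv]
  have hsm : ∀ x, dot3 x ((2:ℝ) • w) = 2 * dot3 x w := by
    intro x; simp [dot3]; ring
  have h2w : (2:ℝ) • w = M⁻¹.mulVec ![0, 0, 2*k] := by
    have : M.mulVec ((2:ℝ) • w) = ![0, 0, 2*k] := by
      rw [key]
      simp [hsm, huw, hvw, ← hk]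
    rw [← this, hinv]
  have hcont : Continuous fun y : Fin 3 → ℝ => M⁻¹.mulVec y := by
    refine continuous_pi fun i => ?_
    simp only [Matrix.mulVec, dotProduct]
    exact continuous_finset_sum _ fun j _ => continuous_const.mul (continuous_apply j)
  have hvec : Filter.Tendsto (fun t => ![a t, b t, c t]) Filter.atTop
      (nhds ![0, 0, 2*k]) := by
    rw [tendsto_pi_nhds]
    intro i
    fin_cases i
    · simpa using ha0
    · simpa using hb0
    · simpa using hc2k
  rw [show r = fun t => M⁻¹.mulVec ![a t, b t, c t] from funext hrt, h2w]
  exact (hcont.tendsto _).comp hvec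

end
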